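/- Let k ≥ 1 and n ≥ 2k + 3. Then the number of 2k-NN graphs on ZMod n at Hamming distance exactly 4 from x* is at least n, i.e., |X_2| ≥ n. -/

import Mathlib

open MeasureTheory Filter
open scoped ENNReal NNReal

noncomputable section

/-- Cyclic distance on `ZMod n`: `min(m, n-m)` where `m` is the representative of `a-b`. -/
def cycDist {n : ℕ} (a b : ZMod n) : ℕ := min (a - b).val (b - a).val

/-- The `2k`-nearest-neighbor graph on `ZMod n` associated to a permutation `σ`. -/
def knnGraph (n k : ℕ) (σ : Equiv.Perm (ZMod n)) : SimpleGraph (ZMod n) where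
  Adj u v := u ≠ v ∧ cycDist (σ.symm u) (σ.symm v) ≤ k
  symm := by
    refine ⟨fun u v h => ?_⟩
    refine ⟨h.1.symm, ?_⟩
    unfold cycDist at *
    omega
  loopless := by exact ⟨fun u h => h.1 rfl⟩

/-- The set of all `2k`-NN graphs on `ZMod n`. -/
def knnGraphs (n k : ℕ) : Set (SimpleGraph (ZMod n)) := Set.range (knnGraph n k)

/-- The hidden `2k`-NN graph: the one associated to the identity permutation. -/
def xstar (n k : ℕ) : SimpleGraph (ZMod n) := knnGraph n k (Equiv.refl _)

/-- Hamming distance between two graphs: the number of unordered pairs adjacent in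
exactly one of them. -/
def gdist {n : ℕ} (x y : SimpleGraph (ZMod n)) : ℕ := (symmDiff x.edgeSet y.edgeSet).ncard

/-- `2k`-NN graphs at Hamming distance `2Δ` from the hidden one. -/
def XDelta (n k Δ : ℕ) : Set (SimpleGraph (ZMod n)) :=
  {x | x ∈ knnGraphs n k ∧ gdist x (xstar n k) = 2 * Δ}

open scoped Classical in
/-- The hidden `2k`-NN graph model: independent edge weights, with law `P` on the edges of
the hidden graph `x` and law `Q` elsewhere. -/
def edgeMeasure (n : ℕ) (P Q : Measure ℝ) (x : SimpleGraph (ZMod n)) :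
    Measure (Sym2 (ZMod n) → ℝ) :=
  if h : n = 0 then 0 else
    haveI : NeZero n := ⟨h⟩
    Measure.pi fun e => if e ∈ x.edgeSet then P else Q

/-- `⟨L, x⟩ = Σ_{e edge of x} log (dP/dQ)(w_e)`. -/
def score (n : ℕ) (P Q : Measure ℝ) (x : SimpleGraph (ZMod n))
    (w : Sym2 (ZMod n) → ℝ) : ℝ :=
  ∑ᶠ e ∈ x.edgeSet, llr P Q (w e)

/-- `Σ_{e edge of x} w_e`. -/
def wsum (n : ℕ) (x : SimpleGraph (ZMod n)) (w : Sym2 (ZMod n) → ℝ) : ℝ :=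
  ∑ᶠ e ∈ x.edgeSet, w e

/-- The order-1/2 Rényi divergence `α(P,Q) = -2 log ∫ √(dP/dQ) dQ`. -/
def renyiHalf (P Q : Measure ℝ) : ℝ :=
  -2 * Real.log (∫ t, Real.sqrt ((P.rnDeriv Q) t).toReal ∂Q)

/-- The Kullback-Leibler divergence `D(P‖Q) = ∫ log (dP/dQ) dP`. -/
def klDivR (P Q : Measure ℝ) : ℝ := ∫ t, llr P Q t ∂P


namespace CardXDeltaAux

lemma cycDist_comm {n : ℕ} (a b : ZMod n) : cycDist a b = cycDist b a := min_comm _ _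

lemma knn_adj {n k : ℕ} (σ : Equiv.Perm (ZMod n)) (u v : ZMod n) :
    (knnGraph n k σ).Adj u v ↔ u ≠ v ∧ cycDist (σ.symm u) (σ.symm v) ≤ k := Iff.rfl

lemma xstar_adj {n k : ℕ} (u v : ZMod n) :
    (xstar n k).Adj u v ↔ u ≠ v ∧ cycDist u v ≤ k := Iff.rfl

lemma val_sub_one {n : ℕ} [NeZero n] {a : ZMod n} (h : a ≠ 0) : (a - 1).val = a.val - 1 := by
  have h1 : 1 ≤ a.val := Nat.one_le_iff_ne_zero.2 (by simpa [ZMod.val_eq_zero] using h)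
  have h2 : a.val - 1 < n := by have := ZMod.val_lt a; omega
  have : a - 1 = ((a.val - 1 : ℕ) : ZMod n) := by
    have : ((a.val : ℕ) : ZMod n) = a := ZMod.natCast_rightInverse a
    rw [Nat.cast_sub h1, this, Nat.cast_one]
  rw [this, ZMod.val_cast_of_lt h2]

lemma shift_eq_iff {n : ℕ} [NeZero n] (c w : ZMod n) {m : ℕ} (hm : m < n) :
    w = c + (m : ZMod n) ↔ (w - c).val = m := by
  constructor
  · intro h
    rw [h]
    simp only [add_sub_cancel_left]
    exact ZMod.val_cast_of_lt hm
  · intro h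
    have : ((w - c).val : ZMod n) = w - c := ZMod.natCast_rightInverse _
    rw [← h, this]; ring

lemma B1 {n k : ℕ} (hk : 1 ≤ k) (hn : 2*k+3 ≤ n) {c v : ZMod n}
    (h0 : (v - c).val ≠ 0) (h1 : (v - c).val ≠ 1) :
    (cycDist (c+1) v ≤ k ∧ ¬ cycDist c v ≤ k) ↔ (v - c).val = k + 1 := by
  haveI : NeZero n := ⟨by omega⟩
  have hdn : (v - c).val < n := ZMod.val_lt _
  have hvc : v - c ≠ 0 := by
    intro h; exact h0 (by rw [h, ZMod.val_zero])
  have e1 : (c - v).val = n - (v - c).val := by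
    have : c - v = -(v - c) := by ring
    rw [this, ZMod.neg_val, if_neg hvc]
  have e2 : (v - (c+1)).val = (v - c).val - 1 := by
    have : v - (c+1) = (v - c) - 1 := by ring
    rw [this, val_sub_one hvc]
  have hvc1 : v - (c+1) ≠ 0 := by
    intro h
    have := e2
    rw [h, ZMod.val_zero] at this
    omega
  have e3 : (c + 1 - v).val = n - ((v - c).val - 1) := by
    have : c + 1 - v = -(v - (c+1)) := by ring
    rw [this, ZMod.neg_val, if_neg hvc1, e2]
  unfold cycDist
  rw [e1, e2, e3, min_le_iff, min_le_iff]
  omega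

lemma B2 {n k : ℕ} (hk : 1 ≤ k) (hn : 2*k+3 ≤ n) {c v : ZMod n}
    (h0 : (v - c).val ≠ 0) (h1 : (v - c).val ≠ 1) :
    (cycDist c v ≤ k ∧ ¬ cycDist (c+1) v ≤ k) ↔ (v - c).val = n - k := by
  haveI : NeZero n := ⟨by omega⟩
  have hdn : (v - c).val < n := ZMod.val_lt _
  have hvc : v - c ≠ 0 := by
    intro h; exact h0 (by rw [h, ZMod.val_zero])
  have e1 : (c - v).val = n - (v - c).val := by
    have : c - v = -(v - c) := by ring
    rw [this, ZMod.neg_val, if_neg hvc]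
  have e2 : (v - (c+1)).val = (v - c).val - 1 := by
    have : v - (c+1) = (v - c) - 1 := by ring
    rw [this, val_sub_one hvc]
  have hvc1 : v - (c+1) ≠ 0 := by
    intro h
    have := e2
    rw [h, ZMod.val_zero] at this
    omega
  have e3 : (c + 1 - v).val = n - ((v - c).val - 1) := by
    have : c + 1 - v = -(v - (c+1)) := by ring
    rw [this, ZMod.neg_val, if_neg hvc1, e2]
  unfold cycDist
  rw [e1, e2, e3, min_le_iff, min_le_iff]
  omega

lemma symmdiff_eq {n k : ℕ} (hk : 1 ≤ k) (hn : 2*k+3 ≤ n) (c : ZMod n) :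
    symmDiff (knnGraph n k (Equiv.swap c (c+1))).edgeSet (xstar n k).edgeSet =
      {s(c, c + ((k+1:ℕ) : ZMod n)), s(c, c + ((n-k:ℕ) : ZMod n)),
       s(c+1, c + ((k+1:ℕ) : ZMod n)), s(c+1, c + ((n-k:ℕ) : ZMod n))} := by
  haveI : NeZero n := ⟨by omega⟩
  ext e
  induction e using Sym2.ind with
  | _ u v =>
    rw [Set.mem_symmDiff]
    simp only [SimpleGraph.mem_edgeSet, Set.mem_insert_iff, Set.mem_singleton_iff, Sym2.eq_iff,
      knn_adj, xstar_adj, Equiv.symm_swap, Equiv.refl_symm, Equiv.refl_apply]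
    have ha : (u - c).val < n := ZMod.val_lt _
    have hb : (v - c).val < n := ZMod.val_lt _
    have chu0 : u = c ↔ (u - c).val = 0 := by
      simpa using shift_eq_iff c u (show 0 < n by omega)
    have chv0 : v = c ↔ (v - c).val = 0 := by
      simpa using shift_eq_iff c v (show 0 < n by omega)
    have chu1 : u = c + 1 ↔ (u - c).val = 1 := by
      have := shift_eq_iff c u (show 1 < n by omega); simpa using this
    have chv1 : v = c + 1 ↔ (v - c).val = 1 := by
      have := shift_eq_iff c v (show 1 < n by omega); simpa using this
    have chuA : u = c + ((k+1:ℕ) : ZMod n) ↔ (u - c).val = k+1 :=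
      shift_eq_iff c u (by omega)
    have chvA : v = c + ((k+1:ℕ) : ZMod n) ↔ (v - c).val = k+1 :=
      shift_eq_iff c v (by omega)
    have chuB : u = c + ((n-k:ℕ) : ZMod n) ↔ (u - c).val = n-k :=
      shift_eq_iff c u (by omega)
    have chvB : v = c + ((n-k:ℕ) : ZMod n) ↔ (v - c).val = n-k :=
      shift_eq_iff c v (by omega)
    rw [chu0, chv0, chu1, chv1, chuA, chvA, chuB, chvB]
    by_cases huv : u = v
    · have hab : (u - c).val = (v - c).val := by rw [huv]
      simp only [huv, ne_eq, not_true_eq_false, false_and, not_false_eq_true, or_self,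
        false_iff]
      omega
    · simp only [ne_eq, huv, not_false_eq_true, true_and]
      by_cases hu0 : u = c
      · have ha0 : (u - c).val = 0 := chu0.mp hu0
        have hvc : v ≠ c := fun h => huv (hu0.trans h.symm)
        have hb0 : (v - c).val ≠ 0 := fun h => hvc (chv0.mpr h)
        have s1 : Equiv.swap c (c+1) u = c + 1 := by rw [hu0]; exact Equiv.swap_apply_left _ _
        by_cases hv1 : v = c + 1
        · have hb1 : (v - c).val = 1 := chv1.mp hv1
          have s2 : Equiv.swap c (c+1) v = c := by rw [hv1]; exact Equiv.swap_apply_right _ _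
          have hP : cycDist (Equiv.swap c (c+1) u) (Equiv.swap c (c+1) v) = cycDist u v := by
            rw [s1, s2, hu0, hv1, cycDist_comm]
          rw [hP, and_not_self_iff, or_self, false_iff]
          omega
        · have hb1 : (v - c).val ≠ 1 := fun h => hv1 (chv1.mpr h)
          have s2 : Equiv.swap c (c+1) v = v := Equiv.swap_apply_of_ne_of_ne hvc hv1
          have hP : cycDist (Equiv.swap c (c+1) u) (Equiv.swap c (c+1) v) = cycDist (c+1) v := by
            rw [s1, s2]
          have hQ : cycDist u v = cycDist c v := by rw [hu0]
          rw [hP, hQ, B1 hk hn hb0 hb1, B2 hk hn hb0 hb1]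
          omega
      · have ha0 : (u - c).val ≠ 0 := fun h => hu0 (chu0.mpr h)
        by_cases hu1 : u = c + 1
        · have ha1 : (u - c).val = 1 := chu1.mp hu1
          have hvc1 : v ≠ c + 1 := fun h => huv (hu1.trans h.symm)
          have hb1 : (v - c).val ≠ 1 := fun h => hvc1 (chv1.mpr h)
          have s1 : Equiv.swap c (c+1) u = c := by rw [hu1]; exact Equiv.swap_apply_right _ _
          by_cases hv0 : v = c
          · have hb0 : (v - c).val = 0 := chv0.mp hv0
            have s2 : Equiv.swap c (c+1) v = c + 1 := by rw [hv0]; exact Equiv.swap_apply_left _ _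
            have hP : cycDist (Equiv.swap c (c+1) u) (Equiv.swap c (c+1) v) = cycDist u v := by
              rw [s1, s2, hu1, hv0, cycDist_comm]
            rw [hP, and_not_self_iff, or_self, false_iff]
            omega
          · have hb0 : (v - c).val ≠ 0 := fun h => hv0 (chv0.mpr h)
            have s2 : Equiv.swap c (c+1) v = v := Equiv.swap_apply_of_ne_of_ne hv0 hvc1
            have hP : cycDist (Equiv.swap c (c+1) u) (Equiv.swap c (c+1) v) = cycDist c v := by
              rw [s1, s2]
            have hQ : cycDist u v = cycDist (c+1) v := by rw [hu1]
            rw [hP, hQ, B2 hk hn hb0 hb1, B1 hk hn hb0 hb1]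
            omega
        · have ha1 : (u - c).val ≠ 1 := fun h => hu1 (chu1.mpr h)
          have s1 : Equiv.swap c (c+1) u = u := Equiv.swap_apply_of_ne_of_ne hu0 hu1
          by_cases hv0 : v = c
          · have hb0 : (v - c).val = 0 := chv0.mp hv0
            have s2 : Equiv.swap c (c+1) v = c + 1 := by rw [hv0]; exact Equiv.swap_apply_left _ _
            have hP : cycDist (Equiv.swap c (c+1) u) (Equiv.swap c (c+1) v) = cycDist (c+1) u := by
              rw [s1, s2, cycDist_comm]
            have hQ : cycDist u v = cycDist c u := by rw [hv0, cycDist_comm]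
            rw [hP, hQ, B1 hk hn ha0 ha1, B2 hk hn ha0 ha1]
            omega
          · have hb0 : (v - c).val ≠ 0 := fun h => hv0 (chv0.mpr h)
            by_cases hv1 : v = c + 1
            · have hb1 : (v - c).val = 1 := chv1.mp hv1
              have s2 : Equiv.swap c (c+1) v = c := by rw [hv1]; exact Equiv.swap_apply_right _ _
              have hP : cycDist (Equiv.swap c (c+1) u) (Equiv.swap c (c+1) v) = cycDist c u := by
                rw [s1, s2, cycDist_comm]
              have hQ : cycDist u v = cycDist (c+1) u := by rw [hv1, cycDist_comm]
              rw [hP, hQ, B2 hk hn ha0 ha1, B1 hk hn ha0 ha1]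
              omega
            · have hb1 : (v - c).val ≠ 1 := fun h => hv1 (chv1.mpr h)
              have s2 : Equiv.swap c (c+1) v = v := Equiv.swap_apply_of_ne_of_ne hv0 hv1
              have hP : cycDist (Equiv.swap c (c+1) u) (Equiv.swap c (c+1) v) = cycDist u v := by
                rw [s1, s2]
              rw [hP, and_not_self_iff, or_self, false_iff]
              omega

lemma shift_ne {n : ℕ} [NeZero n] (c : ZMod n) {m1 m2 : ℕ} (h1 : m1 < n) (h2 : m2 < n)
    (hne : m1 ≠ m2) : c + (m1 : ZMod n) ≠ c + (m2 : ZMod n) := by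
  intro h
  have := (shift_eq_iff c (c + (m1 : ZMod n)) h2).mp h
  rw [add_sub_cancel_left, ZMod.val_cast_of_lt h1] at this
  exact hne this

lemma ncard_four {n k : ℕ} (hk : 1 ≤ k) (hn : 2*k+3 ≤ n) (c : ZMod n) :
    ({s(c, c + ((k+1:ℕ) : ZMod n)), s(c, c + ((n-k:ℕ) : ZMod n)),
      s(c+1, c + ((k+1:ℕ) : ZMod n)), s(c+1, c + ((n-k:ℕ) : ZMod n))} :
      Set (Sym2 (ZMod n))).ncard = 4 := by
  haveI : NeZero n := ⟨by omega⟩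
  have n01 : c ≠ c + 1 := by
    simpa using shift_ne c (show (0:ℕ) < n by omega) (show (1:ℕ) < n by omega) (by omega)
  have n0A : c ≠ c + ((k+1:ℕ) : ZMod n) := by
    simpa using shift_ne c (show (0:ℕ) < n by omega) (show k+1 < n by omega) (by omega)
  have n0B : c ≠ c + ((n-k:ℕ) : ZMod n) := by
    simpa using shift_ne c (show (0:ℕ) < n by omega) (show n-k < n by omega) (by omega)
  have n1A : c + 1 ≠ c + ((k+1:ℕ) : ZMod n) := by
    simpa using shift_ne c (show (1:ℕ) < n by omega) (show k+1 < n by omega) (by omega)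
  have n1B : c + 1 ≠ c + ((n-k:ℕ) : ZMod n) := by
    simpa using shift_ne c (show (1:ℕ) < n by omega) (show n-k < n by omega) (by omega)
  have nAB : c + ((k+1:ℕ) : ZMod n) ≠ c + ((n-k:ℕ) : ZMod n) :=
    shift_ne c (by omega) (by omega) (by omega)
  have d12 : s(c, c + ((k+1:ℕ) : ZMod n)) ≠ s(c, c + ((n-k:ℕ) : ZMod n)) := by
    intro h; rcases Sym2.eq_iff.mp h with ⟨-, h2⟩ | ⟨h1, -⟩
    · exact nAB h2
    · exact n0B h1
  have d13 : s(c, c + ((k+1:ℕ) : ZMod n)) ≠ s(c+1, c + ((k+1:ℕ) : ZMod n)) := by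
    intro h; rcases Sym2.eq_iff.mp h with ⟨h1, -⟩ | ⟨h1, -⟩
    · exact n01 h1
    · exact n0A h1
  have d14 : s(c, c + ((k+1:ℕ) : ZMod n)) ≠ s(c+1, c + ((n-k:ℕ) : ZMod n)) := by
    intro h; rcases Sym2.eq_iff.mp h with ⟨h1, -⟩ | ⟨h1, -⟩
    · exact n01 h1
    · exact n0B h1
  have d23 : s(c, c + ((n-k:ℕ) : ZMod n)) ≠ s(c+1, c + ((k+1:ℕ) : ZMod n)) := by
    intro h; rcases Sym2.eq_iff.mp h with ⟨h1, -⟩ | ⟨h1, -⟩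
    · exact n01 h1
    · exact n0A h1
  have d24 : s(c, c + ((n-k:ℕ) : ZMod n)) ≠ s(c+1, c + ((n-k:ℕ) : ZMod n)) := by
    intro h; rcases Sym2.eq_iff.mp h with ⟨h1, -⟩ | ⟨h1, -⟩
    · exact n01 h1
    · exact n0B h1
  have d34 : s(c+1, c + ((k+1:ℕ) : ZMod n)) ≠ s(c+1, c + ((n-k:ℕ) : ZMod n)) := by
    intro h; rcases Sym2.eq_iff.mp h with ⟨-, h2⟩ | ⟨-, h2⟩
    · exact nAB h2
    · exact n1A h2.symm
  rw [Set.ncard_insert_of_notMem (by simp only [Set.mem_insert_iff, Set.mem_singleton_iff]; push_neg; exact ⟨d12, d13, d14⟩) (Set.toFinite _),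
    Set.ncard_insert_of_notMem (by simp only [Set.mem_insert_iff, Set.mem_singleton_iff]; push_neg; exact ⟨d23, d24⟩) (Set.toFinite _),
    Set.ncard_insert_of_notMem (by simp only [Set.mem_singleton_iff]; exact d34) (Set.toFinite _),
    Set.ncard_singleton]

lemma inj_aux {n k : ℕ} (hk : 1 ≤ k) (hn : 2*k+3 ≤ n) {c c' : ZMod n}
    (h : knnGraph n k (Equiv.swap c (c+1)) = knnGraph n k (Equiv.swap c' (c'+1))) :
    c = c' ∨ (c - c').val = n - k := by
  haveI : NeZero n := ⟨by omega⟩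
  by_cases hcc : c = c'
  · exact Or.inl hcc
  right
  have hS := symmdiff_eq hk hn c
  rw [h, symmdiff_eq hk hn c'] at hS
  have hmem : s(c, c + ((k+1:ℕ) : ZMod n)) ∈
      ({s(c', c' + ((k+1:ℕ) : ZMod n)), s(c', c' + ((n-k:ℕ) : ZMod n)),
        s(c'+1, c' + ((k+1:ℕ) : ZMod n)), s(c'+1, c' + ((n-k:ℕ) : ZMod n))} :
        Set (Sym2 (ZMod n))) := by
    rw [hS]; exact Set.mem_insert _ _
  have hγlt : (c - c').val < n := ZMod.val_lt _
  have hne0 : (c - c').val ≠ 0 := by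
    intro h0
    exact hcc (by simpa [sub_eq_zero] using (ZMod.val_eq_zero (c - c')).mp h0)
  have hcsub : c - c' = (((c - c').val : ℕ) : ZMod n) := (ZMod.natCast_rightInverse _).symm
  have hvalA : ((c + ((k+1:ℕ) : ZMod n)) - c').val = ((c - c').val + (k+1)) % n := by
    have e : (c + ((k+1:ℕ) : ZMod n)) - c' = ((((c - c').val + (k+1) : ℕ)) : ZMod n) := by
      rw [show ((((c - c').val + (k+1) : ℕ)) : ZMod n) = (c - c') + ((k+1:ℕ) : ZMod n) by
        rw [Nat.cast_add, ← hcsub]]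
      ring
    rw [e, ZMod.val_natCast]
  have hmod : ((c - c').val + (k+1)) % n =
      if (c - c').val + (k+1) < n then (c - c').val + (k+1) else (c - c').val + (k+1) - n := by
    split_ifs with hlt
    · exact Nat.mod_eq_of_lt hlt
    · rw [Nat.mod_eq_sub_mod (by omega), Nat.mod_eq_of_lt (by omega)]
  have Y0 : c = c' ↔ (c - c').val = 0 := by
    simpa using shift_eq_iff c' c (show (0:ℕ) < n by omega)
  have Y1 : c = c' + 1 ↔ (c - c').val = 1 := by
    simpa using shift_eq_iff c' c (show (1:ℕ) < n by omega)
  have YA : c = c' + ((k+1:ℕ) : ZMod n) ↔ (c - c').val = k+1 :=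
    shift_eq_iff c' c (by omega)
  have YB : c = c' + ((n-k:ℕ) : ZMod n) ↔ (c - c').val = n-k :=
    shift_eq_iff c' c (by omega)
  have Z0 : c + ((k+1:ℕ) : ZMod n) = c' ↔ ((c + ((k+1:ℕ) : ZMod n)) - c').val = 0 := by
    simpa using shift_eq_iff c' (c + ((k+1:ℕ) : ZMod n)) (show (0:ℕ) < n by omega)
  have Z1 : c + ((k+1:ℕ) : ZMod n) = c' + 1 ↔ ((c + ((k+1:ℕ) : ZMod n)) - c').val = 1 := by
    simpa using shift_eq_iff c' (c + ((k+1:ℕ) : ZMod n)) (show (1:ℕ) < n by omega)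
  have ZA : c + ((k+1:ℕ) : ZMod n) = c' + ((k+1:ℕ) : ZMod n) ↔
      ((c + ((k+1:ℕ) : ZMod n)) - c').val = k+1 :=
    shift_eq_iff c' (c + ((k+1:ℕ) : ZMod n)) (by omega)
  have ZB : c + ((k+1:ℕ) : ZMod n) = c' + ((n-k:ℕ) : ZMod n) ↔
      ((c + ((k+1:ℕ) : ZMod n)) - c').val = n-k :=
    shift_eq_iff c' (c + ((k+1:ℕ) : ZMod n)) (by omega)
  simp only [Set.mem_insert_iff, Set.mem_singleton_iff, Sym2.eq_iff] at hmem
  rw [Y0, Y1, YA, YB, Z0, Z1, ZA, ZB, hvalA, hmod] at hmem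
  split_ifs at hmem <;> (try simp only [and_false, or_false] at hmem) <;> omega

end CardXDeltaAux


/-- **Tightness of the counting exponent at `Δ = 2` (Section 2.1).**
For `k ≥ 1` and `n ≥ 2k+3`, there are at least `n` distinct `2k`-NN graphs at Hamming
distance exactly `4` from `x*`, i.e. `|X_2| ≥ n`. -/
theorem card_XDelta_two_ge (n k : ℕ) (hk : 1 ≤ k) (hn : 2 * k + 3 ≤ n) :
    n ≤ (XDelta n k 2).ncard := by
  haveI : NeZero n := ⟨by omega⟩
  set f : ZMod n → SimpleGraph (ZMod n) :=
    fun c => knnGraph n k (Equiv.swap c (c+1)) with hf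
  have hinj : Function.Injective f := by
    intro c c' h
    have h1 := CardXDeltaAux.inj_aux hk hn h
    have h2 := CardXDeltaAux.inj_aux hk hn h.symm
    rcases h1 with h1 | h1
    · exact h1
    rcases h2 with h2 | h2
    · exact h2.symm
    exfalso
    have hcc : c - c' ≠ 0 := by
      intro h0
      rw [h0, ZMod.val_zero] at h1
      omega
    have : (c' - c).val = n - (c - c').val := by
      have e : c' - c = -(c - c') := by ring
      rw [e, ZMod.neg_val, if_neg hcc]
    omega
  have hrange : Set.range f ⊆ XDelta n k 2 := by
    rintro x ⟨c, rfl⟩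
    refine ⟨⟨Equiv.swap c (c+1), rfl⟩, ?_⟩
    show gdist (f c) (xstar n k) = 2 * 2
    rw [gdist, hf]
    rw [CardXDeltaAux.symmdiff_eq hk hn c, CardXDeltaAux.ncard_four hk hn c]
  haveI : Finite (SimpleGraph (ZMod n)) :=
    Finite.of_injective (fun G => G.Adj) fun G H hGH => SimpleGraph.ext hGH
  calc n = Nat.card (ZMod n) := (Nat.card_zmod n).symm
    _ = Nat.card (Set.range f) := (Nat.card_range_of_injective hinj).symm
    _ = (Set.range f).ncard := Nat.card_coe_set_eq _
    _ ≤ (XDelta n k 2).ncard := Set.ncard_le_ncard hrange (Set.toFinite _)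

end
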